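/- The three lines joining each cusp to its pre-image concur at the center of area of Steiner's Hat: for each i = 1,2,3, the points P_i, P_i' = Δ_u(t_i), and C̄ are collinear, i.e. the cross product (P_i' − P_i) × (C̄ − P_i) = 0 (where (v₁,v₂) × (w₁,w₂) = v₁w₂ − v₂w₁). -/

import Mathlib

open Real

noncomputable def ellipsePt (a b t : ℝ) : ℝ × ℝ := (a * cos t, b * sin t)

noncomputable def steinerHat (a b u t : ℝ) : ℝ × ℝ :=
  (((a ^ 2 - b ^ 2) * (1 + cos (t + u)) * cos t - a ^ 2 * cos u) / a,
   ((a ^ 2 - b ^ 2) * cos t * sin (t + u) - (a ^ 2 - b ^ 2) * sin t - a ^ 2 * sin u) / b)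

/-- Planar cross product. -/
def cross (v w : ℝ × ℝ) : ℝ := v.1 * w.2 - v.2 * w.1

lemma key (a b u t : ℝ) (ha : a ≠ 0) (hb : b ≠ 0)
    (h1 : cos (t + u) = cos (2 * t)) (h2 : sin (t + u) = -sin (2 * t))
    (h3 : cos u = cos (3 * t)) (h4 : sin u = -sin (3 * t)) :
    cross (steinerHat a b u t - ellipsePt a b t)
      ((-((a ^ 2 + b ^ 2) * cos u) / (2 * a), -((a ^ 2 + b ^ 2) * sin u) / (2 * b))
        - ellipsePt a b t) = 0 := by
  have hpyth : sin t ^ 2 + cos t ^ 2 = 1 := sin_sq_add_cos_sq t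
  simp only [cross, steinerHat, ellipsePt, Prod.fst_sub, Prod.snd_sub, h1, h2, h3, h4,
    cos_two_mul, sin_two_mul, cos_three_mul, sin_three_mul]
  field_simp
  linear_combination (4*a^2*b^2*sin t*cos t - 4*a^4*sin t*cos t
    - 8*a^4*sin t*cos t^3 + 8*b^4*sin t*cos t^3) * hpyth

theorem stmt16 (a b u : ℝ) (hb : 0 < b) (hab : b < a)
    (C : ℝ × ℝ)
    (hC : C = (-((a ^ 2 + b ^ 2) * cos u) / (2 * a), -((a ^ 2 + b ^ 2) * sin u) / (2 * b))) :
    cross (steinerHat a b u (-u / 3) - ellipsePt a b (-u / 3))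
        (C - ellipsePt a b (-u / 3)) = 0 ∧
    cross (steinerHat a b u (-u / 3 - 2 * π / 3) - ellipsePt a b (-u / 3 - 2 * π / 3))
        (C - ellipsePt a b (-u / 3 - 2 * π / 3)) = 0 ∧
    cross (steinerHat a b u (-u / 3 - 4 * π / 3) - ellipsePt a b (-u / 3 - 4 * π / 3))
        (C - ellipsePt a b (-u / 3 - 4 * π / 3)) = 0 := by
  have ha : a ≠ 0 := (hb.trans hab).ne'
  have hb' : b ≠ 0 := hb.ne'
  subst hC
  refine ⟨?_, ?_, ?_⟩
  · apply key a b u _ ha hb'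
    · rw [show 2 * (-u / 3) = -(-u/3 + u) by ring, cos_neg]
    · rw [show 2 * (-u / 3) = -(-u/3 + u) by ring, sin_neg, neg_neg]
    · rw [show 3 * (-u / 3) = -u by ring, cos_neg]
    · rw [show 3 * (-u / 3) = -u by ring, sin_neg, neg_neg]
  · set t := -u / 3 - 2 * π / 3 with ht
    apply key a b u t ha hb'
    · rw [show 2 * t = -((t + u) + 2 * π) by rw [ht]; ring, cos_neg, cos_add_two_pi]
    · rw [show 2 * t = -((t + u) + 2 * π) by rw [ht]; ring, sin_neg, sin_add_two_pi, neg_neg]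
    · rw [show 3 * t = -(u + 2 * π) by rw [ht]; ring, cos_neg, cos_add_two_pi]
    · rw [show 3 * t = -(u + 2 * π) by rw [ht]; ring, sin_neg, sin_add_two_pi, neg_neg]
  · set t := -u / 3 - 4 * π / 3 with ht
    apply key a b u t ha hb'
    · rw [show 2 * t = -(((t + u) + 2 * π) + 2 * π) by rw [ht]; ring, cos_neg,
        cos_add_two_pi, cos_add_two_pi]
    · rw [show 2 * t = -(((t + u) + 2 * π) + 2 * π) by rw [ht]; ring, sin_neg,
        sin_add_two_pi, sin_add_two_pi, neg_neg]
    · rw [show 3 * t = -((u + 2 * π) + 2 * π) by rw [ht]; ring, cos_neg,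
        cos_add_two_pi, cos_add_two_pi]
    · rw [show 3 * t = -((u + 2 * π) + 2 * π) by rw [ht]; ring, sin_neg,
        sin_add_two_pi, sin_add_two_pi, neg_neg]
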